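/- arXiv:2305.18768 — 4 statements merged into one kernel-verified Lean document; each statement's English description precedes it below -/
import Mathlib

section
/- Let H be a real Banach space, F : H → H a continuous map, and v : ℝ → H continuously differentiable on [0,1]. Suppose that for every continuously differentiable function ρ : ℝ → ℝ and every continuous linear functional λ : H → ℝ one has ρ(1)·λ(v(1)) − ρ(0)·λ(v(0)) = ∫₀¹ ( ρ'(t)·λ(v(t)) + ρ(t)·λ(F(v(t))) ) dt. Then v'(t) = F(v(t)) for all t ∈ [0,1]. -/
open Set intervalIntegral

lemma aux_not_pos (g : ℝ → ℝ) (hg : ContinuousOn g (Set.Icc 0 1))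
    (h : ∀ ρ : ℝ → ℝ, ContDiff ℝ 1 ρ → (∫ t in (0:ℝ)..1, ρ t * g t) = 0)
    {t₀ : ℝ} (ht₀ : t₀ ∈ Set.Ioo (0:ℝ) 1) : ¬ 0 < g t₀ := by
  intro hpos
  obtain ⟨ht₀0, ht₀1⟩ := ht₀
  have ht₀Icc : t₀ ∈ Icc (0:ℝ) 1 := ⟨ht₀0.le, ht₀1.le⟩
  have hcont := hg t₀ ht₀Icc
  have hmem : g ⁻¹' Set.Ioi (g t₀ / 2) ∈ nhdsWithin t₀ (Icc (0:ℝ) 1) :=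
    hcont (Ioi_mem_nhds (by linarith))
  rw [Metric.mem_nhdsWithin_iff] at hmem
  obtain ⟨ε, hε, hball⟩ := hmem
  obtain ⟨r, hr0, hrε, hrt, hr1⟩ : ∃ r : ℝ, 0 < r ∧ r ≤ ε ∧ r ≤ t₀ ∧ r ≤ 1 - t₀ :=
    ⟨min ε (min t₀ (1 - t₀)), lt_min hε (lt_min ht₀0 (by linarith)), min_le_left _ _,
      (min_le_right _ _).trans (min_le_left _ _), (min_le_right _ _).trans (min_le_right _ _)⟩
  set hb : ContDiffBump t₀ := ⟨r / 2, r, by linarith, by linarith⟩ with hbdef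
  set ρ : ℝ → ℝ := fun x => hb x with hρdef
  have hbrIn : hb.rIn = r / 2 := rfl
  have hbrOut : hb.rOut = r := rfl
  have hρC : ContDiff ℝ 1 ρ := hb.contDiff
  -- pointwise nonnegativity on Icc
  have hnonneg : ∀ t ∈ Icc (0:ℝ) 1, 0 ≤ ρ t * g t := by
    intro t ht
    rcases eq_or_ne (ρ t) 0 with h0 | h0
    · simp [h0]
    · have hsupp : t ∈ Metric.ball t₀ r := by
        rw [← hbrOut, ← hb.support_eq]; exact h0
      have hgt : g t₀ / 2 < g t :=
        hball ⟨Metric.ball_subset_ball hrε hsupp, ht⟩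
      have hρpos : 0 < ρ t := hb.pos_of_mem_ball (hbrOut ▸ hsupp)
      nlinarith
  -- integrability
  have hcg : ContinuousOn (fun t => ρ t * g t) (Icc 0 1) :=
    (hρC.continuous.continuousOn).mul hg
  have hint : ∀ x y : ℝ, x ∈ Icc (0:ℝ) 1 → y ∈ Icc (0:ℝ) 1 →
      IntervalIntegrable (fun t => ρ t * g t) MeasureTheory.volume x y := by
    intro x y hx hy
    refine (hcg.mono ?_).intervalIntegrable
    rw [← Set.uIcc_of_le (zero_le_one' ℝ), Set.uIcc_subset_uIcc_iff_mem]
    rw [Set.uIcc_of_le (zero_le_one' ℝ)]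
    exact ⟨hx, hy⟩
  have haIcc : t₀ - r / 2 ∈ Icc (0:ℝ) 1 := ⟨by linarith, by linarith⟩
  have hbIcc : t₀ + r / 2 ∈ Icc (0:ℝ) 1 := ⟨by linarith, by linarith⟩
  have h0Icc : (0:ℝ) ∈ Icc (0:ℝ) 1 := ⟨le_rfl, zero_le_one⟩
  have h1Icc : (1:ℝ) ∈ Icc (0:ℝ) 1 := ⟨zero_le_one, le_rfl⟩
  have hmid : 0 < ∫ t in (t₀ - r / 2)..(t₀ + r / 2), ρ t * g t := by
    apply intervalIntegral_pos_of_pos_on (hint _ _ haIcc hbIcc) _ (by linarith)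
    intro x hx
    obtain ⟨hx1, hx2⟩ := hx
    have hxIcc : x ∈ Icc (0:ℝ) 1 := ⟨by linarith, by linarith⟩
    have hxcb : x ∈ Metric.closedBall t₀ hb.rIn := by
      rw [hbrIn, Metric.mem_closedBall, Real.dist_eq, abs_le]
      constructor <;> linarith
    have hone : ρ x = 1 := hb.one_of_mem_closedBall hxcb
    have hxball : x ∈ Metric.ball t₀ ε ∩ Icc 0 1 := by
      refine ⟨?_, hxIcc⟩
      rw [Metric.mem_ball, Real.dist_eq, abs_lt]
      constructor <;> linarith
    have hgx : g t₀ / 2 < g x := hball hxball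
    rw [hone, one_mul]; linarith
  have h1' : 0 ≤ ∫ t in (0:ℝ)..(t₀ - r / 2), ρ t * g t := by
    apply integral_nonneg haIcc.1
    intro u hu; exact hnonneg u ⟨hu.1, hu.2.trans haIcc.2⟩
  have h3' : 0 ≤ ∫ t in (t₀ + r / 2)..(1:ℝ), ρ t * g t := by
    apply integral_nonneg hbIcc.2
    intro u hu; exact hnonneg u ⟨hbIcc.1.trans hu.1, hu.2⟩
  have hsplit : (∫ t in (0:ℝ)..1, ρ t * g t) =
      (∫ t in (0:ℝ)..(t₀ - r / 2), ρ t * g t) + (∫ t in (t₀ - r / 2)..(t₀ + r / 2), ρ t * g t)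
        + (∫ t in (t₀ + r / 2)..(1:ℝ), ρ t * g t) := by
    rw [integral_add_adjacent_intervals (hint _ _ h0Icc haIcc) (hint _ _ haIcc hbIcc),
      integral_add_adjacent_intervals (hint _ _ h0Icc hbIcc) (hint _ _ hbIcc h1Icc)]
  have hzero := h ρ hρC
  rw [hsplit] at hzero
  linarith

lemma aux_zero (g : ℝ → ℝ) (hg : ContinuousOn g (Set.Icc 0 1))
    (h : ∀ ρ : ℝ → ℝ, ContDiff ℝ 1 ρ → (∫ t in (0:ℝ)..1, ρ t * g t) = 0)
    {t₀ : ℝ} (ht₀ : t₀ ∈ Set.Ioo (0:ℝ) 1) : g t₀ = 0 := by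
  have h1 := aux_not_pos g hg h ht₀
  have h2 := aux_not_pos (fun t => -g t) (hg.neg) (fun ρ hρ => by
    have heq : (∫ t in (0:ℝ)..1, ρ t * (-g t)) = - ∫ t in (0:ℝ)..1, ρ t * g t := by
      rw [← intervalIntegral.integral_neg]; congr 1; funext t; ring
    rw [heq, h ρ hρ, neg_zero]) ht₀
  simp only [neg_pos] at h2
  linarith [not_lt.mp h1, not_lt.mp h2]

lemma aux_closure {H : Type*} [NormedAddCommGroup H] (D : ℝ → H)
    (hD : ContinuousOn D (Set.Icc 0 1)) (h0 : ∀ t ∈ Set.Ioo (0:ℝ) 1, D t = 0) :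
    ∀ t ∈ Set.Icc (0:ℝ) 1, D t = 0 := by
  intro t ht
  have hcl : t ∈ closure (Set.Ioo (0:ℝ) 1) := by
    rw [closure_Ioo (by norm_num : (0:ℝ) ≠ 1)]; exact ht
  have hne : (nhdsWithin t (Set.Ioo (0:ℝ) 1)).NeBot :=
    mem_closure_iff_nhdsWithin_neBot.mp hcl
  have h1 : Filter.Tendsto D (nhdsWithin t (Set.Ioo 0 1)) (nhds (D t)) :=
    (hD t ht).mono Set.Ioo_subset_Icc_self
  have h2 : Filter.Tendsto D (nhdsWithin t (Set.Ioo 0 1)) (nhds 0) := by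
    refine Filter.Tendsto.congr' ?_ tendsto_const_nhds
    exact Filter.eventually_of_mem self_mem_nhdsWithin (fun x hx => (h0 x hx).symm)
  exact tendsto_nhds_unique h1 h2

/-- Converse direction of Theorem 1: if a C¹ curve `v` satisfies the linear
measure equation tested against all products `ρ(t)·λ(h)` with `ρ` C¹ and `λ`
a continuous linear functional, then `v' = F(v)` on `[0,1]`. -/
theorem measure_reformulation_converse
    {H : Type*} [NormedAddCommGroup H] [NormedSpace ℝ H] [CompleteSpace H]
    (F : H → H) (hF : Continuous F) (v v' : ℝ → H)
    (hv : ∀ t ∈ Set.Icc (0:ℝ) 1, HasDerivAt v (v' t) t)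
    (hv' : ContinuousOn v' (Set.Icc (0:ℝ) 1))
    (htest : ∀ ρ : ℝ → ℝ, ContDiff ℝ 1 ρ → ∀ lam : H →L[ℝ] ℝ,
      ρ 1 * lam (v 1) - ρ 0 * lam (v 0) =
        ∫ t in (0:ℝ)..1, (deriv ρ t * lam (v t) + ρ t * lam (F (v t)))) :
    ∀ t ∈ Set.Icc (0:ℝ) 1, v' t = F (v t) := by
  have hvc : ContinuousOn v (Set.Icc (0:ℝ) 1) := fun t ht =>
    (hv t ht).continuousAt.continuousWithinAt
  -- interior case
  have hIoo : ∀ t ∈ Set.Ioo (0:ℝ) 1, v' t = F (v t) := by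
    intro t ht
    have key : ∀ lam : H →L[ℝ] ℝ, lam (v' t) - lam (F (v t)) = 0 := by
      intro lam
      set g : ℝ → ℝ := fun s => lam (v' s) - lam (F (v s)) with hgdef
      have hgc : ContinuousOn g (Set.Icc 0 1) :=
        (lam.continuous.comp_continuousOn hv').sub
          (lam.continuous.comp_continuousOn (hF.comp_continuousOn hvc))
      refine aux_zero g hgc ?_ ht
      intro ρ hρ
      -- integration by parts via FTC
      have hderiv : ∀ s ∈ Set.uIcc (0:ℝ) 1, HasDerivAt (fun u => ρ u * lam (v u))
          (deriv ρ s * lam (v s) + ρ s * lam (v' s)) s := by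
        intro s hs
        rw [Set.uIcc_of_le (zero_le_one' ℝ)] at hs
        have h1 : HasDerivAt ρ (deriv ρ s) s :=
          (hρ.differentiable one_ne_zero).differentiableAt.hasDerivAt
        have h2 : HasDerivAt (fun u => lam (v u)) (lam (v' s)) s :=
          lam.hasFDerivAt.comp_hasDerivAt s (hv s hs)
        exact h1.mul h2
      have hci : ∀ f : ℝ → ℝ, ContinuousOn f (Set.Icc 0 1) →
          IntervalIntegrable f MeasureTheory.volume 0 1 := by
        intro f hf
        refine (hf.mono ?_).intervalIntegrable
        rw [Set.uIcc_of_le (zero_le_one' ℝ)]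
      have hρ' : Continuous (deriv ρ) := (hρ.iterate_deriv' 0 1).continuous
      have hA : IntervalIntegrable (fun s => deriv ρ s * lam (v s) + ρ s * lam (v' s))
          MeasureTheory.volume 0 1 := by
        apply hci
        exact ((hρ'.continuousOn).mul (lam.continuous.comp_continuousOn hvc)).add
          ((hρ.continuous.continuousOn).mul (lam.continuous.comp_continuousOn hv'))
      have hB : IntervalIntegrable (fun s => deriv ρ s * lam (v s) + ρ s * lam (F (v s)))
          MeasureTheory.volume 0 1 := by
        apply hci
        exact ((hρ'.continuousOn).mul (lam.continuous.comp_continuousOn hvc)).add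
          ((hρ.continuous.continuousOn).mul
            (lam.continuous.comp_continuousOn (hF.comp_continuousOn hvc)))
      have hftc : (∫ s in (0:ℝ)..1, (deriv ρ s * lam (v s) + ρ s * lam (v' s)))
          = ρ 1 * lam (v 1) - ρ 0 * lam (v 0) :=
        intervalIntegral.integral_eq_sub_of_hasDerivAt hderiv hA
      have hsub : (∫ s in (0:ℝ)..1, ρ s * g s)
          = (∫ s in (0:ℝ)..1, (deriv ρ s * lam (v s) + ρ s * lam (v' s)))
            - (∫ s in (0:ℝ)..1, (deriv ρ s * lam (v s) + ρ s * lam (F (v s)))) := by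
        rw [← intervalIntegral.integral_sub hA hB]
        congr 1; funext s; simp only [hgdef]; ring
      rw [hsub, hftc, ← htest ρ hρ lam, sub_self]
    have := NormedSpace.eq_zero_of_forall_dual_eq_zero ℝ (x := v' t - F (v t))
      (fun lam => by rw [map_sub]; exact key lam)
    exact sub_eq_zero.mp this
  -- endpoints by continuity
  have hD : ContinuousOn (fun s => v' s - F (v s)) (Set.Icc (0:ℝ) 1) :=
    hv'.sub (hF.comp_continuousOn hvc)
  intro t ht
  have hzero := aux_closure _ hD (fun s hs => sub_eq_zero.mpr (hIoo s hs)) t ht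
  exact sub_eq_zero.mp hzero
end

section
/- Let u : ℝ × ℝ → ℂ be such that u(t, x + 2π) = u(t, x) for all t, x, u is continuously differentiable in t, twice continuously differentiable in x, with ∂u/∂t and ∂²u/∂x² jointly continuous, and suppose ∂u/∂t (t,x) = ∂²u/∂x² (t,x) for all t ∈ [0,1] and x ∈ ℝ. For n ∈ ℤ define c_n(t) := (1/(2π)) ∫_{−π}^{π} u(t,x) e^{−i n x} dx. Then for all ℓ, k ∈ ℕ and n₁, …, n_k ∈ ℤ: ∏_{j=1}^k c_{n_j}(1) − 0^ℓ ∏_{j=1}^k c_{n_j}(0) = ∫₀¹ ℓ t^{ℓ−1} ∏_{j=1}^k c_{n_j}(t) dt − (Σ_{j=1}^k n_j²) ∫₀¹ t^ℓ ∏_{j=1}^k c_{n_j}(t) dt, where 0⁰ = 1 and the term ℓ t^{ℓ−1} is identically zero when ℓ = 0. -/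
/-- The `n`-th Fourier coefficient of `u(t,·)`:
`c_n(t) = (1/(2π)) ∫_{-π}^{π} u(t,x) e^{-inx} dx`. -/
noncomputable def fourierCoeffHeat (u : ℝ × ℝ → ℂ) (n : ℤ) (t : ℝ) : ℂ :=
  (2 * (Real.pi : ℂ))⁻¹ *
    ∫ x in (-Real.pi)..Real.pi, u (t, x) * Complex.exp (-Complex.I * (n : ℂ) * (x : ℂ))

open MeasureTheory

/-- kernel -/
noncomputable def eKer (n : ℤ) (x : ℝ) : ℂ := Complex.exp (-Complex.I * (n : ℂ) * (x : ℂ))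

lemma eKer_hasDerivAt (n : ℤ) (x : ℝ) :
    HasDerivAt (eKer n) (eKer n x * (-Complex.I * n)) x := by
  have h0 : HasDerivAt (fun x : ℝ => (x : ℂ)) 1 x := by
    simpa using (hasDerivAt_id x).ofReal_comp
  have h1 : HasDerivAt (fun x : ℝ => (-Complex.I * n) * (x : ℂ)) (-Complex.I * n) x := by
    simpa using h0.const_mul (-Complex.I * n)
  exact h1.cexp

lemma eKer_norm (n : ℤ) (x : ℝ) : ‖eKer n x‖ = 1 := by
  simp only [eKer, Complex.norm_exp]
  have : (-Complex.I * n * x).re = 0 := by simp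
  rw [this, Real.exp_zero]

lemma eKer_periodic (n : ℤ) (x : ℝ) : eKer n (x + 2 * Real.pi) = eKer n x := by
  have : (-Complex.I * n * ((x : ℝ) + 2 * Real.pi : ℝ)) =
      -Complex.I * n * x + (-n : ℤ) * (2 * Real.pi * Complex.I) := by
    push_cast; ring
  rw [eKer, this, Complex.exp_add, Complex.exp_int_mul_two_pi_mul_I, mul_one, eKer]

lemma eKer_endpoints (n : ℤ) : eKer n Real.pi = eKer n (-Real.pi) := by
  have := eKer_periodic n (-Real.pi)
  rw [show -Real.pi + 2 * Real.pi = Real.pi by ring] at this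
  exact this

lemma eKer_continuous (n : ℤ) : Continuous (eKer n) := by
  unfold eKer; fun_prop

section Main

variable {u ut ux uxx : ℝ × ℝ → ℂ}

lemma ux_periodic (hper : ∀ t x : ℝ, u (t, x + 2 * Real.pi) = u (t, x))
    (hdx : ∀ t x : ℝ, HasDerivAt (fun y => u (t, y)) (ux (t, x)) x) (t x : ℝ) :
    ux (t, x + 2 * Real.pi) = ux (t, x) := by
  have h2 : HasDerivAt (fun y => u (t, y + 2 * Real.pi)) (ux (t, x + 2 * Real.pi)) x :=
    HasDerivAt.comp_add_const x _ (hdx t (x + 2 * Real.pi))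
  have h3 : (fun y => u (t, y + 2 * Real.pi)) = fun y => u (t, y) := funext fun y => hper t y
  rw [h3] at h2
  exact h2.unique (hdx t x)

lemma coeff_hasDerivAt (hu : Continuous u) (hut : Continuous ut)
    (hdt : ∀ t x : ℝ, HasDerivAt (fun s => u (s, x)) (ut (t, x)) t)
    (n : ℤ) (t₀ : ℝ) :
    HasDerivAt (fourierCoeffHeat u n)
      ((2 * (Real.pi : ℂ))⁻¹ * ∫ x in (-Real.pi)..Real.pi, ut (t₀, x) * eKer n x) t₀ := by
  obtain ⟨M, hM⟩ :=
    ((isCompact_Icc (a := t₀ - 1) (b := t₀ + 1)).prod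
      (isCompact_Icc (a := -Real.pi) (b := Real.pi))).exists_bound_of_continuousOn
      hut.continuousOn
  have key := intervalIntegral.hasDerivAt_integral_of_dominated_loc_of_deriv_le
    (F := fun s x => u (s, x) * eKer n x) (F' := fun s x => ut (s, x) * eKer n x)
    (x₀ := t₀) (a := -Real.pi) (b := Real.pi) (bound := fun _ => M) (μ := volume)
    (s := Metric.ball t₀ 1) (Metric.ball_mem_nhds t₀ one_pos)
    (Filter.Eventually.of_forall fun s =>
      (((hu.comp (Continuous.prodMk_right s)).mul (eKer_continuous n)).aestronglyMeasurable).restrict)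
    (((hu.comp (Continuous.prodMk_right t₀)).mul (eKer_continuous n)).intervalIntegrable _ _)
    ((((hut.comp (Continuous.prodMk_right t₀)).mul (eKer_continuous n)).aestronglyMeasurable).restrict)
    (Filter.Eventually.of_forall fun x hx => fun s hs => by
      rw [norm_mul, eKer_norm, mul_one]
      refine hM (s, x) ?_
      constructor
      · have : s ∈ Set.Ioo (t₀ - 1) (t₀ + 1) := by rwa [Real.ball_eq_Ioo] at hs
        exact Set.Ioo_subset_Icc_self this
      · have hx' : x ∈ Set.Ioc (-Real.pi) Real.pi := by
          rwa [Set.uIoc_of_le (by linarith [Real.pi_pos] : -Real.pi ≤ Real.pi)] at hx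
        exact ⟨hx'.1.le, hx'.2⟩)
    intervalIntegrable_const
    (Filter.Eventually.of_forall fun x hx => fun s hs => (hdt s x).mul_const _)
  exact key.2.const_mul _

lemma pull_const (n : ℤ) (c : ℂ) (f : ℝ → ℂ) :
    (∫ x in (-Real.pi)..Real.pi, (eKer n x * c) * f x)
      = c * ∫ x in (-Real.pi)..Real.pi, eKer n x * f x := by
  simp_rw [mul_comm (eKer n _) c, mul_assoc]
  exact intervalIntegral.integral_const_mul _ _

lemma ibp_step (n : ℤ) (t : ℝ) {v v' : ℝ → ℂ} (hv : ∀ x : ℝ, HasDerivAt v (v' x) x)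
    (hvc : Continuous v) (hv'c : Continuous v')
    (hbd : v Real.pi = v (-Real.pi)) :
    (∫ x in (-Real.pi)..Real.pi, eKer n x * v' x)
      = (Complex.I * n) * ∫ x in (-Real.pi)..Real.pi, eKer n x * v x := by
  have h := intervalIntegral.integral_mul_deriv_eq_deriv_mul
    (a := -Real.pi) (b := Real.pi)
    (u := eKer n) (u' := fun x => eKer n x * (-Complex.I * n)) (v := v) (v' := v')
    (fun x _ => eKer_hasDerivAt n x) (fun x _ => hv x)
    (((eKer_continuous n).mul continuous_const).intervalIntegrable _ _)
    (hv'c.intervalIntegrable _ _)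
  rw [h, hbd, eKer_endpoints, sub_self, zero_sub, pull_const]
  ring

lemma ibp (hper : ∀ t x : ℝ, u (t, x + 2 * Real.pi) = u (t, x))
    (hu : Continuous u) (hux : Continuous ux) (huxx : Continuous uxx)
    (hdx : ∀ t x : ℝ, HasDerivAt (fun y => u (t, y)) (ux (t, x)) x)
    (hdxx : ∀ t x : ℝ, HasDerivAt (fun y => ux (t, y)) (uxx (t, x)) x)
    (n : ℤ) (t : ℝ) :
    (∫ x in (-Real.pi)..Real.pi, uxx (t, x) * eKer n x)
      = (-(n : ℂ) ^ 2) * ∫ x in (-Real.pi)..Real.pi, u (t, x) * eKer n x := by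
  have hπ : (-Real.pi : ℝ) + 2 * Real.pi = Real.pi := by ring
  have hbu : u (t, Real.pi) = u (t, -Real.pi) := by
    conv_lhs => rw [← hπ]
    exact hper t (-Real.pi)
  have hbux : ux (t, Real.pi) = ux (t, -Real.pi) := by
    conv_lhs => rw [← hπ]
    exact ux_periodic hper hdx t (-Real.pi)
  have s1 := ibp_step n t (v := fun x => ux (t, x)) (v' := fun x => uxx (t, x))
    (hdxx t) (hux.comp (Continuous.prodMk_right t)) (huxx.comp (Continuous.prodMk_right t)) hbux
  have s2 := ibp_step n t (v := fun x => u (t, x)) (v' := fun x => ux (t, x))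
    (hdx t) (hu.comp (Continuous.prodMk_right t)) (hux.comp (Continuous.prodMk_right t)) hbu
  have comm1 : (∫ x in (-Real.pi)..Real.pi, uxx (t, x) * eKer n x)
      = ∫ x in (-Real.pi)..Real.pi, eKer n x * uxx (t, x) := by
    simp_rw [mul_comm]
  have comm2 : (∫ x in (-Real.pi)..Real.pi, u (t, x) * eKer n x)
      = ∫ x in (-Real.pi)..Real.pi, eKer n x * u (t, x) := by
    simp_rw [mul_comm]
  rw [comm1, comm2, s1, s2]
  have : Complex.I * (n : ℂ) * (Complex.I * n) = -(n : ℂ) ^ 2 := by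
    rw [show Complex.I * (n:ℂ) * (Complex.I * n) = Complex.I ^ 2 * (n:ℂ)^2 by ring,
      Complex.I_sq]
    ring
  rw [← mul_assoc, this]

lemma coeff_deriv_heat (hper : ∀ t x : ℝ, u (t, x + 2 * Real.pi) = u (t, x))
    (hu : Continuous u) (hux : Continuous ux)
    (hut : Continuous ut) (huxx : Continuous uxx)
    (hdt : ∀ t x : ℝ, HasDerivAt (fun s => u (s, x)) (ut (t, x)) t)
    (hdx : ∀ t x : ℝ, HasDerivAt (fun y => u (t, y)) (ux (t, x)) x)
    (hdxx : ∀ t x : ℝ, HasDerivAt (fun y => ux (t, y)) (uxx (t, x)) x)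
    (hheat : ∀ t ∈ Set.Icc (0:ℝ) 1, ∀ x : ℝ, ut (t, x) = uxx (t, x))
    (n : ℤ) {t : ℝ} (ht : t ∈ Set.Icc (0:ℝ) 1) :
    HasDerivAt (fourierCoeffHeat u n) (-(n : ℂ) ^ 2 * fourierCoeffHeat u n t) t := by
  have h := coeff_hasDerivAt hu hut hdt n t
  have e1 : (∫ x in (-Real.pi)..Real.pi, ut (t, x) * eKer n x)
      = -(n : ℂ) ^ 2 * ∫ x in (-Real.pi)..Real.pi, u (t, x) * eKer n x := by
    rw [intervalIntegral.integral_congr (g := fun x => uxx (t, x) * eKer n x)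
      (fun x _ => by rw [hheat t ht x])]
    exact ibp hper hu hux huxx hdx hdxx n t
  rw [e1] at h
  have e2 : fourierCoeffHeat u n t
      = (2 * (Real.pi : ℂ))⁻¹ * ∫ x in (-Real.pi)..Real.pi, u (t, x) * eKer n x := rfl
  rw [e2]
  convert h using 1
  ring

end Main

/-- Linear moment equation (7.3) for the linear heat equation: for a classical
`2π`-periodic solution of `∂u/∂t = ∂²u/∂x²` on `[0,1]`, the moments built from
the Fourier coefficients satisfy
`∏ c_{n_j}(1) - 0^ℓ ∏ c_{n_j}(0) = ∫₀¹ ℓ t^{ℓ-1} ∏ c_{n_j}(t) dt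
  - (Σ_j n_j²) ∫₀¹ t^ℓ ∏ c_{n_j}(t) dt`. -/
theorem linear_moment_equation_heat
    (u ut ux uxx : ℝ × ℝ → ℂ)
    (hper : ∀ t x : ℝ, u (t, x + 2 * Real.pi) = u (t, x))
    (hu : Continuous u) (hux : Continuous ux)
    (hut : Continuous ut) (huxx : Continuous uxx)
    (hdt : ∀ t x : ℝ, HasDerivAt (fun s => u (s, x)) (ut (t, x)) t)
    (hdx : ∀ t x : ℝ, HasDerivAt (fun y => u (t, y)) (ux (t, x)) x)
    (hdxx : ∀ t x : ℝ, HasDerivAt (fun y => ux (t, y)) (uxx (t, x)) x)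
    (hheat : ∀ t ∈ Set.Icc (0:ℝ) 1, ∀ x : ℝ, ut (t, x) = uxx (t, x)) :
    ∀ (ℓ k : ℕ) (n : Fin k → ℤ),
      (∏ j, fourierCoeffHeat u (n j) 1) - (0 : ℂ) ^ ℓ * ∏ j, fourierCoeffHeat u (n j) 0 =
        (∫ t in (0:ℝ)..1, (ℓ : ℂ) * (t : ℂ) ^ (ℓ - 1) * ∏ j, fourierCoeffHeat u (n j) t) -
        (∑ j, ((n j : ℂ)) ^ 2) *
          ∫ t in (0:ℝ)..1, (t : ℂ) ^ ℓ * ∏ j, fourierCoeffHeat u (n j) t := by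
  intro ℓ k n
  set S : ℂ := ∑ j, ((n j : ℂ)) ^ 2 with hS
  have hc_cont : ∀ j : Fin k, Continuous (fourierCoeffHeat u (n j)) := fun j =>
    continuous_iff_continuousAt.mpr fun t => (coeff_hasDerivAt hu hut hdt (n j) t).continuousAt
  have hP : Continuous (fun t => ∏ j, fourierCoeffHeat u (n j) t) :=
    continuous_finset_prod _ fun j _ => (hc_cont j)
  -- derivative of the product on [0,1]
  have hPd : ∀ t ∈ Set.Icc (0:ℝ) 1,
      HasDerivAt (fun t => ∏ j, fourierCoeffHeat u (n j) t)
        ((-S) * ∏ j, fourierCoeffHeat u (n j) t) t := by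
    intro t ht
    have h := HasDerivAt.fun_finsetProd (u := Finset.univ)
      (f := fun j : Fin k => fourierCoeffHeat u (n j))
      (f' := fun j : Fin k => -((n j : ℂ)) ^ 2 * fourierCoeffHeat u (n j) t) (x := t)
      (fun j _ => coeff_deriv_heat hper hu hux hut huxx hdt hdx hdxx hheat (n j) ht)
    refine h.congr_deriv (Eq.symm ?_)
    simp only [smul_eq_mul]
    rw [hS, ← Finset.sum_neg_distrib, Finset.sum_mul]
    exact Finset.sum_congr rfl fun j _ => by
      rw [mul_left_comm, Finset.prod_erase_mul _ _ (Finset.mem_univ j)]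
  -- FTC for F t = t^ℓ * P t
  have hFd : ∀ t ∈ Set.uIcc (0:ℝ) 1,
      HasDerivAt (fun t : ℝ => ((t : ℂ)) ^ ℓ * ∏ j, fourierCoeffHeat u (n j) t)
        ((ℓ : ℂ) * (t : ℂ) ^ (ℓ - 1) * ∏ j, fourierCoeffHeat u (n j) t
          + ((t : ℂ)) ^ ℓ * ((-S) * ∏ j, fourierCoeffHeat u (n j) t)) t := by
    intro t ht
    rw [Set.uIcc_of_le zero_le_one] at ht
    exact ((hasDerivAt_pow ℓ ((t : ℝ) : ℂ)).comp_ofReal).mul (hPd t ht)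
  have hA_int : IntervalIntegrable
      (fun t : ℝ => (ℓ : ℂ) * (t : ℂ) ^ (ℓ - 1) * ∏ j, fourierCoeffHeat u (n j) t)
      volume 0 1 :=
    ((continuous_const.mul (Complex.continuous_ofReal.pow _)).mul hP).intervalIntegrable _ _
  have hB_int : IntervalIntegrable
      (fun t : ℝ => ((t : ℂ)) ^ ℓ * ((-S) * ∏ j, fourierCoeffHeat u (n j) t))
      volume 0 1 :=
    ((Complex.continuous_ofReal.pow _).mul (continuous_const.mul hP)).intervalIntegrable _ _
  have key := intervalIntegral.integral_eq_sub_of_hasDerivAt hFd (hA_int.add hB_int)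
  rw [intervalIntegral.integral_add hA_int hB_int] at key
  have e2 : (∫ t in (0:ℝ)..1, ((t : ℂ)) ^ ℓ * ((-S) * ∏ j, fourierCoeffHeat u (n j) t))
      = (-S) * ∫ t in (0:ℝ)..1, ((t : ℂ)) ^ ℓ * ∏ j, fourierCoeffHeat u (n j) t := by
    have hcomm : ∀ t : ℝ, ((t : ℂ)) ^ ℓ * ((-S) * ∏ j, fourierCoeffHeat u (n j) t)
        = (-S) * (((t : ℂ)) ^ ℓ * ∏ j, fourierCoeffHeat u (n j) t) := fun t => by ring
    simp_rw [hcomm]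
    exact intervalIntegral.integral_const_mul _ _
  rw [e2] at key
  have hF1 : (((1:ℝ) : ℂ)) ^ ℓ * ∏ j, fourierCoeffHeat u (n j) 1
      = ∏ j, fourierCoeffHeat u (n j) 1 := by norm_num
  have hF0 : (((0:ℝ) : ℂ)) ^ ℓ * ∏ j, fourierCoeffHeat u (n j) 0
      = (0 : ℂ) ^ ℓ * ∏ j, fourierCoeffHeat u (n j) 0 := by norm_num
  rw [hF1, hF0] at key
  linear_combination -key
end

section
/- Let ε ∈ ℝ, m₁, m₂ ∈ ℕ, and let u : ℝ × ℝ → ℂ be such that u(t, x + 2π) = u(t, x) for all t, x, u is continuously differentiable in t, twice continuously differentiable in x, with ∂u/∂t and ∂²u/∂x² jointly continuous. For n ∈ ℤ define c_n(t) := (1/(2π)) ∫_{−π}^{π} u(t,x) e^{−i n x} dx. Suppose ∂u/∂t (t,x) = ∂²u/∂x² (t,x) + ε · (c_{m₁}(t) + c_{−m₁}(t)) · (c_{m₂}(t) + c_{−m₂}(t)) for all t ∈ [0,1] and x ∈ ℝ. Then for all ℓ, k ∈ ℕ and n₁, …, n_k ∈ ℤ: ∏_{j=1}^k c_{n_j}(1)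 − 0^ℓ ∏_{j=1}^k c_{n_j}(0) = ∫₀¹ ℓ t^{ℓ−1} ∏_{j=1}^k c_{n_j}(t) dt − Σ_{j=1}^k n_j² ∫₀¹ t^ℓ ∏_{j=1}^k c_{n_j}(t) dt + ε Σ_{j=1}^k δ_{n_j,0} ∫₀¹ t^ℓ ( ∏_{i≠j} c_{n_i}(t) ) · (c_{m₁}(t) + c_{−m₁}(t)) · (c_{m₂}(t) + c_{−m₂}(t)) dt, where δ_{n,0} is 1 if n = 0 and 0 otherwise, 0⁰ = 1 and the term ℓ t^{ℓ−1} vanishes identically when ℓ = 0. -/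
open MeasureTheory intervalIntegral Set Finset

noncomputable def E (N : ℤ) (x : ℝ) : ℂ := Complex.exp (-Complex.I * (N : ℂ) * (x : ℂ))

lemma E_norm (N : ℤ) (x : ℝ) : ‖E N x‖ = 1 := by
  have h : -Complex.I * (N : ℂ) * (x : ℝ) = ((-(N * x) : ℝ) : ℂ) * Complex.I := by
    push_cast; ring
  rw [E, h, Complex.norm_exp_ofReal_mul_I]

lemma E_cont (N : ℤ) : Continuous (E N) := by
  unfold E; fun_prop

lemma E_deriv (N : ℤ) (x : ℝ) :
    HasDerivAt (E N) (-Complex.I * (N : ℂ) * E N x) x := by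
  have h : HasDerivAt (fun z : ℂ => Complex.exp (-Complex.I * (N : ℂ) * z))
      (-Complex.I * (N : ℂ) * Complex.exp (-Complex.I * (N : ℂ) * (x : ℂ))) (x : ℂ) := by
    have := (((hasDerivAt_id ((x : ℝ) : ℂ)).const_mul (-Complex.I * (N : ℂ))).cexp)
    simpa [mul_comm] using this
  exact h.comp_ofReal

lemma E_per (N : ℤ) : E N (-Real.pi) = E N Real.pi := by
  have h : -Complex.I * (N : ℂ) * ((-Real.pi : ℝ) : ℂ)
      = -Complex.I * (N : ℂ) * (Real.pi : ℂ) + (N : ℂ) * (2 * Real.pi * Complex.I) := by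
    push_cast; ring
  rw [E, E, h, Complex.exp_add, Complex.exp_int_mul_two_pi_mul_I, mul_one]

lemma E_integral (N : ℤ) :
    (∫ x in (-Real.pi)..Real.pi, E N x) = if N = 0 then (2 * (Real.pi : ℂ)) else 0 := by
  rcases eq_or_ne N 0 with h | h
  · subst h
    simp only [E, Int.cast_zero, mul_zero, zero_mul, Complex.exp_zero, if_true]
    rw [intervalIntegral.integral_const]
    rw [Complex.real_smul]
    push_cast
    ring
  · rw [if_neg h]
    have hc : (-Complex.I * (N : ℂ)) ≠ 0 := by
      simp [Complex.I_ne_zero, Int.cast_eq_zero, h]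
    have key := integral_exp_mul_complex (a := -Real.pi) (b := Real.pi) hc
    have hper := E_per N
    simp only [E] at hper
    calc (∫ x in (-Real.pi)..Real.pi, E N x)
        = ∫ x in (-Real.pi)..Real.pi, Complex.exp ((-Complex.I * (N : ℂ)) * (x : ℂ)) := rfl
      _ = (Complex.exp (-Complex.I * (N:ℂ) * (Real.pi:ℂ))
            - Complex.exp (-Complex.I * (N:ℂ) * ((-Real.pi : ℝ):ℂ))) / (-Complex.I * (N:ℂ)) := key
      _ = 0 := by rw [hper]; simp



/-- Linear moment equation (7.7)–(7.8) for the heat equation with distributed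
quadratic nonlinearity
`∂u/∂t = ∂²u/∂x² + ε (c_{m₁}+c_{-m₁})(c_{m₂}+c_{-m₂})`. -/
theorem linear_moment_equation_heat_distributed_nonlinearity
    (ε : ℝ) (m₁ m₂ : ℕ) (u ut ux uxx : ℝ × ℝ → ℂ)
    (hper : ∀ t x : ℝ, u (t, x + 2 * Real.pi) = u (t, x))
    (hu : Continuous u) (hux : Continuous ux)
    (hut : Continuous ut) (huxx : Continuous uxx)
    (hdt : ∀ t x : ℝ, HasDerivAt (fun s => u (s, x)) (ut (t, x)) t)
    (hdx : ∀ t x : ℝ, HasDerivAt (fun y => u (t, y)) (ux (t, x)) x)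
    (hdxx : ∀ t x : ℝ, HasDerivAt (fun y => ux (t, y)) (uxx (t, x)) x)
    (hpde : ∀ t ∈ Set.Icc (0:ℝ) 1, ∀ x : ℝ,
      ut (t, x) = uxx (t, x) +
        (ε : ℂ) * (fourierCoeffHeat u (m₁ : ℤ) t + fourierCoeffHeat u (-(m₁ : ℤ)) t) *
          (fourierCoeffHeat u (m₂ : ℤ) t + fourierCoeffHeat u (-(m₂ : ℤ)) t)) :
    ∀ (ℓ k : ℕ) (n : Fin k → ℤ),
      (∏ j, fourierCoeffHeat u (n j) 1) - (0 : ℂ) ^ ℓ * ∏ j, fourierCoeffHeat u (n j) 0 =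
        (∫ t in (0:ℝ)..1, (ℓ : ℂ) * (t : ℂ) ^ (ℓ - 1) * ∏ j, fourierCoeffHeat u (n j) t) -
        (∑ j, ((n j : ℂ)) ^ 2) *
          (∫ t in (0:ℝ)..1, (t : ℂ) ^ ℓ * ∏ j, fourierCoeffHeat u (n j) t) +
        (ε : ℂ) * ∑ j, (if n j = 0 then (1 : ℂ) else 0) *
          ∫ t in (0:ℝ)..1, (t : ℂ) ^ ℓ *
            (∏ i ∈ Finset.univ.erase j, fourierCoeffHeat u (n i) t) *
            ((fourierCoeffHeat u (m₁ : ℤ) t + fourierCoeffHeat u (-(m₁ : ℤ)) t) *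
              (fourierCoeffHeat u (m₂ : ℤ) t + fourierCoeffHeat u (-(m₂ : ℤ)) t)) := by
  intro ℓ k n
  classical
  set c : ℤ → ℝ → ℂ := fun N t => fourierCoeffHeat u N t with hc
  -- the nonlinear forcing term
  set Nl : ℝ → ℂ := fun t => (c (m₁ : ℤ) t + c (-(m₁ : ℤ)) t) * (c (m₂ : ℤ) t + c (-(m₂ : ℤ)) t)
    with hNl
  -- periodicity of u and ux at the endpoints
  have hproj : Continuous (fun p : ℝ × ℝ => (p.1, p.2)) := by fun_prop
  have huPi : ∀ t : ℝ, u (t, Real.pi) = u (t, -Real.pi) := by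
    intro t
    have := hper t (-Real.pi)
    rwa [show -Real.pi + 2 * Real.pi = Real.pi by ring] at this
  have huxper : ∀ t x : ℝ, ux (t, x + 2 * Real.pi) = ux (t, x) := by
    intro t x
    have h1 := hdx t (x + 2 * Real.pi)
    have h2 : HasDerivAt (fun y => u (t, y + 2 * Real.pi)) (ux (t, x + 2 * Real.pi)) x := by
      exact HasDerivAt.comp_add_const x _ h1
    have h3 : (fun y => u (t, y + 2 * Real.pi)) = fun y => u (t, y) := funext (hper t)
    rw [h3] at h2
    exact h2.unique (hdx t x)
  have huxPi : ∀ t : ℝ, ux (t, Real.pi) = ux (t, -Real.pi) := by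
    intro t
    have := huxper t (-Real.pi)
    rwa [show -Real.pi + 2 * Real.pi = Real.pi by ring] at this
  -- integration by parts
  have hIBP : ∀ (v v' : ℝ × ℝ → ℂ), Continuous v → Continuous v' →
      (∀ t x : ℝ, HasDerivAt (fun y => v (t, y)) (v' (t, x)) x) →
      (∀ t : ℝ, v (t, Real.pi) = v (t, -Real.pi)) → ∀ (N : ℤ) (t : ℝ),
      (∫ x in (-Real.pi)..Real.pi, v' (t, x) * E N x)
        = (Complex.I * (N : ℂ)) * ∫ x in (-Real.pi)..Real.pi, v (t, x) * E N x := by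
    intro v v' hv hv' hd hperv N t
    have h := intervalIntegral.integral_mul_deriv_eq_deriv_mul_of_hasDerivAt
      (a := -Real.pi) (b := Real.pi)
      (u := E N) (v := fun x => v (t, x))
      (u' := fun x => -Complex.I * (N : ℂ) * E N x) (v' := fun x => v' (t, x))
      (E_cont N).continuousOn ((hv.comp (Continuous.prodMk_right t)).continuousOn)
      (fun x _ => E_deriv N x) (fun x _ => hd t x)
      ((continuous_const.mul (E_cont N)).intervalIntegrable _ _)
      ((hv'.comp (Continuous.prodMk_right t)).intervalIntegrable _ _)
    have h2 : (∫ x in (-Real.pi)..Real.pi, (-Complex.I * (N : ℂ) * E N x) * v (t, x))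
        = (-Complex.I * (N : ℂ)) * ∫ x in (-Real.pi)..Real.pi, v (t, x) * E N x := by
      rw [← intervalIntegral.integral_const_mul]
      apply intervalIntegral.integral_congr
      intro x _
      ring
    beta_reduce at h
    rw [h2, hperv t, E_per N] at h
    have h3 : (∫ x in (-Real.pi)..Real.pi, v' (t, x) * E N x)
        = ∫ x in (-Real.pi)..Real.pi, E N x * v' (t, x) :=
      intervalIntegral.integral_congr (fun x _ => mul_comm _ _)
    rw [h3, h]
    ring
  have huxxE : ∀ (N : ℤ) (t : ℝ),
      (∫ x in (-Real.pi)..Real.pi, uxx (t, x) * E N x)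
        = (-(N : ℂ) ^ 2) * ∫ x in (-Real.pi)..Real.pi, u (t, x) * E N x := by
    intro N t
    rw [hIBP ux uxx hux huxx hdxx huxPi N t, hIBP u ux hu hux hdx huPi N t]
    rw [show Complex.I * (N:ℂ) * (Complex.I * (N:ℂ) * ∫ x in (-Real.pi)..Real.pi, u (t,x) * E N x)
      = (Complex.I ^ 2 * (N:ℂ)^2) * ∫ x in (-Real.pi)..Real.pi, u (t,x) * E N x by ring,
      Complex.I_sq]
    ring
  -- continuity of Fourier coefficients
  have hFc : ∀ (N : ℤ) (t : ℝ), Continuous fun x => u (t, x) * E N x := by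
    intro N t
    exact (hu.comp (Continuous.prodMk_right t)).mul (E_cont N)
  have hcCont : ∀ N : ℤ, Continuous (c N) := by
    intro N
    have hcc : Continuous fun t => ∫ x in (-Real.pi)..Real.pi, u (t, x) * E N x := by
      apply continuous_parametric_intervalIntegral_of_continuous' (μ := volume)
        (f := fun t x => u (t, x) * E N x) _ (-Real.pi) Real.pi
      exact (hu.mul ((E_cont N).comp continuous_snd) : Continuous fun p : ℝ × ℝ => u p * E N p.2)
    exact continuous_const.mul hcc
  have hNlCont : Continuous Nl := by
    exact ((hcCont _).add (hcCont _)).mul ((hcCont _).add (hcCont _))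
  -- derivative of Fourier coefficients
  have hcd : ∀ (N : ℤ) (t₀ : ℝ), HasDerivAt (c N)
      ((2 * (Real.pi : ℂ))⁻¹ * ∫ x in (-Real.pi)..Real.pi, ut (t₀, x) * E N x) t₀ := by
    intro N t₀
    obtain ⟨C, hC⟩ := (IsCompact.prod (isCompact_Icc : IsCompact (Set.Icc (t₀ - 1) (t₀ + 1)))
      (isCompact_Icc : IsCompact (Set.Icc (-Real.pi) Real.pi))).exists_bound_of_continuousOn
      hut.continuousOn
    have hFc' : ∀ t : ℝ, Continuous fun x => ut (t, x) * E N x :=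
      fun t => (hut.comp (Continuous.prodMk_right t)).mul (E_cont N)
    have key := intervalIntegral.hasDerivAt_integral_of_dominated_loc_of_deriv_le
      (F := fun t x => u (t, x) * E N x) (F' := fun t x => ut (t, x) * E N x)
      (a := -Real.pi) (b := Real.pi) (μ := volume) (x₀ := t₀) (bound := fun _ => C)
      (s := Metric.ball t₀ 1) (Metric.ball_mem_nhds t₀ zero_lt_one)
      (Filter.Eventually.of_forall fun t => ((hFc N t).aestronglyMeasurable))
      ((hFc N t₀).intervalIntegrable _ _)
      ((hFc' t₀).aestronglyMeasurable)
      ?_ intervalIntegrable_const ?_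
    · exact (key.2).const_mul _
    · apply Filter.Eventually.of_forall
      intro x hx t htb
      have hxI : x ∈ Set.Icc (-Real.pi) Real.pi := by
        rw [Set.uIoc_of_le (by linarith [Real.pi_pos] : -Real.pi ≤ Real.pi)] at hx
        exact Set.Ioc_subset_Icc_self hx
      have htI : t ∈ Set.Icc (t₀ - 1) (t₀ + 1) := by
        rw [Metric.mem_ball, Real.dist_eq, abs_sub_lt_iff] at htb
        constructor <;> linarith [htb.1, htb.2]
      have := hC (t, x) (Set.mk_mem_prod htI hxI)
      calc ‖ut (t, x) * E N x‖ = ‖ut (t, x)‖ * ‖E N x‖ := norm_mul _ _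
        _ = ‖ut (t, x)‖ := by rw [E_norm, mul_one]
        _ ≤ C := this
    · apply Filter.Eventually.of_forall
      intro x hx t htb
      exact (hdt t x).mul_const _
  -- on [0,1] the derivative takes the moment form
  have hD : ∀ (N : ℤ), ∀ t ∈ Set.Icc (0:ℝ) 1, HasDerivAt (c N)
      ((-(N : ℂ) ^ 2) * c N t + (ε : ℂ) * (if N = 0 then (1:ℂ) else 0) * Nl t) t := by
    intro N t ht
    have h0 := hcd N t
    have heq : (2 * (Real.pi : ℂ))⁻¹ * (∫ x in (-Real.pi)..Real.pi, ut (t, x) * E N x)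
        = (-(N : ℂ) ^ 2) * c N t + (ε : ℂ) * (if N = 0 then (1:ℂ) else 0) * Nl t := by
      have h1 : Set.EqOn (fun x : ℝ => ut (t, x) * E N x)
          (fun x => uxx (t, x) * E N x + ((ε : ℂ) * Nl t) * E N x)
          (Set.uIcc (-Real.pi) Real.pi) := by
        intro x _
        simp only
        rw [hpde t ht x]
        simp only [hNl]
        ring
      have hi1 : IntervalIntegrable (fun x => uxx (t, x) * E N x) volume (-Real.pi) Real.pi :=
        ((huxx.comp (Continuous.prodMk_right t)).mul (E_cont N)).intervalIntegrable _ _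
      have hi2 : IntervalIntegrable (fun x => ((ε : ℂ) * Nl t) * E N x) volume
          (-Real.pi) Real.pi :=
        (continuous_const.mul (E_cont N)).intervalIntegrable _ _
      rw [intervalIntegral.integral_congr h1,
        intervalIntegral.integral_add hi1 hi2,
        huxxE N t, intervalIntegral.integral_const_mul, E_integral N]
      have hpi : (2 * (Real.pi : ℂ)) ≠ 0 := by
        simp [Real.pi_ne_zero, Complex.ofReal_ne_zero]
      have hcdef : c N t = (2 * (Real.pi : ℂ))⁻¹ * ∫ x in (-Real.pi)..Real.pi, u (t, x) * E N x :=
        rfl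
      rcases eq_or_ne N 0 with hN | hN
      · rw [if_pos hN, if_pos hN, hcdef]
        field_simp
      · rw [if_neg hN, if_neg hN, hcdef]
        ring
    rw [← heq]
    exact h0
  -- FTC for G t = t^ℓ * ∏ c
  have key : (∫ t in (0:ℝ)..1,
        ((ℓ : ℂ) * (t : ℂ) ^ (ℓ - 1) * ∏ j, c (n j) t +
          (t : ℂ) ^ ℓ * ∑ j, (∏ i ∈ Finset.univ.erase j, c (n i) t) *
            ((-(n j : ℂ) ^ 2) * c (n j) t + (ε : ℂ) * (if n j = 0 then (1:ℂ) else 0) * Nl t)))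
      = ((1:ℝ):ℂ) ^ ℓ * ∏ j, c (n j) 1 - ((0:ℝ):ℂ) ^ ℓ * ∏ j, c (n j) 0 := by
    have huIcc : Set.uIcc (0:ℝ) 1 = Set.Icc 0 1 := Set.uIcc_of_le zero_le_one
    have hGd : ∀ t ∈ Set.uIcc (0:ℝ) 1,
        HasDerivAt (fun s : ℝ => ((s:ℂ)) ^ ℓ * ∏ j, c (n j) s)
        ((ℓ : ℂ) * (t : ℂ) ^ (ℓ - 1) * ∏ j, c (n j) t +
          (t : ℂ) ^ ℓ * ∑ j, (∏ i ∈ Finset.univ.erase j, c (n i) t) *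
            ((-(n j : ℂ) ^ 2) * c (n j) t +
              (ε : ℂ) * (if n j = 0 then (1:ℂ) else 0) * Nl t)) t := by
      intro t ht
      rw [huIcc] at ht
      have h1 : HasDerivAt (fun s : ℝ => ((s:ℂ)) ^ ℓ) ((ℓ : ℂ) * (t:ℂ) ^ (ℓ - 1)) t :=
        (hasDerivAt_pow ℓ ((t:ℝ) : ℂ)).comp_ofReal
      have h2 : HasDerivAt (fun s => ∏ j, c (n j) s)
          (∑ j, (∏ i ∈ Finset.univ.erase j, c (n i) t) •
            ((-(n j : ℂ) ^ 2) * c (n j) t +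
              (ε : ℂ) * (if n j = 0 then (1:ℂ) else 0) * Nl t)) t :=
        HasDerivAt.fun_finsetProd (fun j _ => hD (n j) t ht)
      have h3 := h1.fun_mul h2
      simpa [smul_eq_mul] using h3
    have hgc : Continuous (fun t : ℝ => (ℓ : ℂ) * (t : ℂ) ^ (ℓ - 1) * ∏ j, c (n j) t +
        (t : ℂ) ^ ℓ * ∑ j, (∏ i ∈ Finset.univ.erase j, c (n i) t) *
          ((-(n j : ℂ) ^ 2) * c (n j) t +
            (ε : ℂ) * (if n j = 0 then (1:ℂ) else 0) * Nl t)) := by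
      apply Continuous.add
      · exact (continuous_const.mul (Complex.continuous_ofReal.pow _)).mul
          (continuous_finset_prod _ fun j _ => hcCont (n j))
      · exact (Complex.continuous_ofReal.pow _).mul
          (continuous_finset_sum _ fun j _ =>
            (continuous_finset_prod _ fun i _ => hcCont (n i)).mul
              ((continuous_const.mul (hcCont (n j))).add (continuous_const.mul hNlCont)))
    exact intervalIntegral.integral_eq_sub_of_hasDerivAt hGd (hgc.intervalIntegrable _ _)
  -- continuity of the various integrands
  have hXc : Continuous fun t : ℝ => (t:ℂ) ^ ℓ * ∏ j, c (n j) t :=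
    (Complex.continuous_ofReal.pow _).mul (continuous_finset_prod _ fun j _ => hcCont (n j))
  have hAc : Continuous fun t : ℝ => (ℓ : ℂ) * (t:ℂ) ^ (ℓ - 1) * ∏ j, c (n j) t :=
    (continuous_const.mul (Complex.continuous_ofReal.pow _)).mul
      (continuous_finset_prod _ fun j _ => hcCont (n j))
  have hYc : ∀ j : Fin k, Continuous fun t : ℝ =>
      (t:ℂ) ^ ℓ * (∏ i ∈ Finset.univ.erase j, c (n i) t) * Nl t := fun j =>
    ((Complex.continuous_ofReal.pow _).mul
      (continuous_finset_prod _ fun i _ => hcCont (n i))).mul hNlCont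
  have hTc : ∀ j : Fin k, Continuous fun t : ℝ =>
      (-(n j : ℂ) ^ 2) * ((t:ℂ) ^ ℓ * ∏ j, c (n j) t) +
        (ε : ℂ) * (if n j = 0 then (1:ℂ) else 0) *
          ((t:ℂ) ^ ℓ * (∏ i ∈ Finset.univ.erase j, c (n i) t) * Nl t) := fun j =>
    (continuous_const.mul hXc).add (continuous_const.mul (hYc j))
  have hSc : Continuous fun t : ℝ =>
      (t : ℂ) ^ ℓ * ∑ j, (∏ i ∈ Finset.univ.erase j, c (n i) t) *
        ((-(n j : ℂ) ^ 2) * c (n j) t + (ε : ℂ) * (if n j = 0 then (1:ℂ) else 0) * Nl t) :=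
    (Complex.continuous_ofReal.pow _).mul
      (continuous_finset_sum _ fun j _ =>
        (continuous_finset_prod _ fun i _ => hcCont (n i)).mul
          ((continuous_const.mul (hcCont (n j))).add (continuous_const.mul hNlCont)))
  -- pointwise rearrangement of the sum part
  have hsplit : ∀ t : ℝ,
      (t : ℂ) ^ ℓ * ∑ j, (∏ i ∈ Finset.univ.erase j, c (n i) t) *
        ((-(n j : ℂ) ^ 2) * c (n j) t + (ε : ℂ) * (if n j = 0 then (1:ℂ) else 0) * Nl t)
      = ∑ j, ((-(n j : ℂ) ^ 2) * ((t:ℂ) ^ ℓ * ∏ j, c (n j) t) +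
          (ε : ℂ) * (if n j = 0 then (1:ℂ) else 0) *
            ((t:ℂ) ^ ℓ * (∏ i ∈ Finset.univ.erase j, c (n i) t) * Nl t)) := by
    intro t
    rw [Finset.mul_sum]
    refine Finset.sum_congr rfl fun j _ => ?_
    have hpe : (∏ i, c (n i) t) = (∏ i ∈ Finset.univ.erase j, c (n i) t) * c (n j) t :=
      (Finset.prod_erase_mul _ _ (Finset.mem_univ j)).symm
    rw [hpe]
    ring
  have step1 : (∫ t in (0:ℝ)..1,
        ((ℓ : ℂ) * (t : ℂ) ^ (ℓ - 1) * ∏ j, c (n j) t +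
          (t : ℂ) ^ ℓ * ∑ j, (∏ i ∈ Finset.univ.erase j, c (n i) t) *
            ((-(n j : ℂ) ^ 2) * c (n j) t + (ε : ℂ) * (if n j = 0 then (1:ℂ) else 0) * Nl t)))
      = (∫ t in (0:ℝ)..1, (ℓ : ℂ) * (t : ℂ) ^ (ℓ - 1) * ∏ j, c (n j) t) +
        ∑ j, ∫ t in (0:ℝ)..1,
          ((-(n j : ℂ) ^ 2) * ((t:ℂ) ^ ℓ * ∏ j, c (n j) t) +
            (ε : ℂ) * (if n j = 0 then (1:ℂ) else 0) *
              ((t:ℂ) ^ ℓ * (∏ i ∈ Finset.univ.erase j, c (n i) t) * Nl t)) := by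
    rw [intervalIntegral.integral_add (hAc.intervalIntegrable _ _) (hSc.intervalIntegrable _ _)]
    congr 1
    rw [intervalIntegral.integral_congr (fun t _ => hsplit t)]
    exact intervalIntegral.integral_finset_sum fun j _ => (hTc j).intervalIntegrable _ _
  have step2 : ∀ j : Fin k, (∫ t in (0:ℝ)..1,
        ((-(n j : ℂ) ^ 2) * ((t:ℂ) ^ ℓ * ∏ j, c (n j) t) +
          (ε : ℂ) * (if n j = 0 then (1:ℂ) else 0) *
            ((t:ℂ) ^ ℓ * (∏ i ∈ Finset.univ.erase j, c (n i) t) * Nl t)))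
      = (-(n j : ℂ) ^ 2) * (∫ t in (0:ℝ)..1, (t:ℂ) ^ ℓ * ∏ j, c (n j) t) +
        (ε : ℂ) * (if n j = 0 then (1:ℂ) else 0) *
          (∫ t in (0:ℝ)..1, (t:ℂ) ^ ℓ * (∏ i ∈ Finset.univ.erase j, c (n i) t) * Nl t) := by
    intro j
    rw [intervalIntegral.integral_add ((continuous_const.fun_mul hXc).intervalIntegrable _ _)
      ((continuous_const.fun_mul (hYc j)).intervalIntegrable _ _),
      intervalIntegral.integral_const_mul, intervalIntegral.integral_const_mul]
  have hL : (∏ j, c (n j) 1) - (0 : ℂ) ^ ℓ * ∏ j, c (n j) 0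
      = ((1:ℝ):ℂ) ^ ℓ * ∏ j, c (n j) 1 - ((0:ℝ):ℂ) ^ ℓ * ∏ j, c (n j) 0 := by
    norm_num
  rw [hL, ← key, step1, Finset.sum_congr rfl fun j _ => step2 j]
  rw [Finset.sum_add_distrib, ← Finset.sum_mul]
  have h4 : (∑ j, -(n j : ℂ) ^ 2) = -(∑ j, (n j : ℂ) ^ 2) := by
    simp
  have h5 : (∑ j, (ε : ℂ) * (if n j = 0 then (1:ℂ) else 0) *
        (∫ t in (0:ℝ)..1, (t:ℂ) ^ ℓ * (∏ i ∈ Finset.univ.erase j, c (n i) t) * Nl t))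
      = (ε : ℂ) * ∑ j, (if n j = 0 then (1:ℂ) else 0) *
        (∫ t in (0:ℝ)..1, (t:ℂ) ^ ℓ * (∏ i ∈ Finset.univ.erase j, c (n i) t) * Nl t) := by
    rw [Finset.mul_sum]
    exact Finset.sum_congr rfl fun j _ => by ring
  rw [h4, h5]
  ring
end

section
/- Let L : ℝ[X] → ℝ be a linear functional. Then there exists a Borel measure μ on the interval [0,1] such that L(p) = ∫₀¹ p(x) dμ(x) for every polynomial p ∈ ℝ[X] if and only if L(p²) ≥ 0 and L(X·(1−X)·p²) ≥ 0 for every p ∈ ℝ[X]. -/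
open Polynomial MeasureTheory Filter Set Finset Topology

namespace HausdorffMP

variable {L : Polynomial ℝ →ₗ[ℝ] ℝ}

def Pos (L : Polynomial ℝ →ₗ[ℝ] ℝ) : Prop :=
  ∀ p : Polynomial ℝ, 0 ≤ L (p ^ 2) ∧ 0 ≤ L (Polynomial.X * (1 - Polynomial.X) * p ^ 2)

theorem pos_pow_mul (hL : Pos L) (a b : ℕ) :
    0 ≤ L (X ^ a * (1 - X) ^ b) := by
  rcases Nat.even_or_odd a with ⟨c, hc⟩ | ⟨c, hc⟩ <;>
    rcases Nat.even_or_odd b with ⟨d, hd⟩ | ⟨d, hd⟩ <;> subst hc hd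
  · have h : (X:ℝ[X]) ^ (c + c) * (1 - X) ^ (d + d) = (X ^ c * (1 - X) ^ d) ^ 2 := by ring
    rw [h]; exact (hL _).1
  · have h : (X:ℝ[X]) ^ (c + c) * (1 - X) ^ (2 * d + 1)
        = X * (1 - X) * (X ^ c * (1 - X) ^ d) ^ 2 + ((1 - X) * (X ^ c * (1 - X) ^ d)) ^ 2 := by
      ring
    rw [h, map_add]
    exact add_nonneg (hL _).2 (hL _).1
  · have h : (X:ℝ[X]) ^ (2 * c + 1) * (1 - X) ^ (d + d)
        = X * (1 - X) * (X ^ c * (1 - X) ^ d) ^ 2 + (X * (X ^ c * (1 - X) ^ d)) ^ 2 := by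
      ring
    rw [h, map_add]
    exact add_nonneg (hL _).2 (hL _).1
  · have h : (X:ℝ[X]) ^ (2 * c + 1) * (1 - X) ^ (2 * d + 1)
        = X * (1 - X) * (X ^ c * (1 - X) ^ d) ^ 2 := by ring
    rw [h]; exact (hL _).2

theorem pos_bernstein (hL : Pos L) (n k : ℕ) :
    0 ≤ L (bernsteinPolynomial ℝ n k) := by
  have h : bernsteinPolynomial ℝ n k = (n.choose k : ℝ) • (X ^ k * (1 - X) ^ (n - k)) := by
    rw [bernsteinPolynomial, smul_eq_C_mul, C_eq_natCast]
    ring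
  rw [h, _root_.map_smul]
  exact mul_nonneg (by positivity) (pos_pow_mul hL k (n - k))

theorem L_eq_sum (L : Polynomial ℝ →ₗ[ℝ] ℝ) {p : ℝ[X]} {d : ℕ} (hd : p.natDegree ≤ d) :
    L p = ∑ j ∈ Finset.range (d + 1), p.coeff j * L (X ^ j) := by
  conv_lhs => rw [p.as_sum_range' (d + 1) (Nat.lt_succ_of_le hd)]
  rw [map_sum]
  refine Finset.sum_congr rfl fun j _ => ?_
  rw [← C_mul_X_pow_eq_monomial, ← smul_eq_C_mul, _root_.map_smul, smul_eq_mul]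


/-- Key derivative identity: `X(1-X) * b'_{n,k} = (k - nX) * b_{n,k}`. -/
theorem bern_deriv (n k : ℕ) :
    (X * (1 - X)) * derivative (bernsteinPolynomial ℝ n k)
      = ((k : ℝ[X]) - (n : ℝ[X]) * X) * bernsteinPolynomial ℝ n k := by
  rcases lt_or_ge n k with h | h
  · rw [bernsteinPolynomial.eq_zero_of_lt ℝ h]; simp
  obtain ⟨e, he⟩ : ∃ e, n = k + e := ⟨n - k, (Nat.add_sub_cancel' h).symm⟩
  subst he
  rw [bernsteinPolynomial]
  have hnk : (k + e) - k = e := by omega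
  rw [hnk]
  rw [derivative_mul, derivative_mul, derivative_natCast, derivative_X_pow, derivative_pow]
  have h1 : derivative (1 - X : ℝ[X]) = -1 := by
    rw [derivative_sub, derivative_one, derivative_X]; ring
  rw [h1]
  rcases Nat.eq_zero_or_pos k with hk | hk
  · subst hk
    rcases Nat.eq_zero_or_pos e with hee | hee
    · subst hee; simp
    · obtain ⟨e', rfl⟩ : ∃ e', e = e' + 1 := ⟨e - 1, by omega⟩
      have h2 : (1 - X : ℝ[X]) ^ (e' + 1) = (1 - X) * (1 - X) ^ e' := by ring
      simp only [Nat.add_sub_cancel]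
      rw [h2]
      simp only [C_eq_natCast, C_0]
      push_cast
      ring
  · obtain ⟨k', rfl⟩ : ∃ k', k = k' + 1 := ⟨k - 1, by omega⟩
    have h2 : (X : ℝ[X]) ^ (k' + 1) = X * X ^ k' := by ring
    rcases Nat.eq_zero_or_pos e with hee | hee
    · subst hee
      simp only [Nat.add_sub_cancel]
      rw [h2]
      simp only [C_eq_natCast, C_0]
      push_cast
      ring
    · obtain ⟨e', rfl⟩ : ∃ e', e = e' + 1 := ⟨e - 1, by omega⟩
      have h3 : (1 - X : ℝ[X]) ^ (e' + 1) = (1 - X) * (1 - X) ^ e' := by ring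
      simp only [Nat.add_sub_cancel]
      rw [h2, h3]
      simp only [C_eq_natCast, C_0]
      push_cast
      ring

/-- The `m`-th moment polynomial of the Bernstein basis. -/
noncomputable def T (m n : ℕ) : ℝ[X] :=
  ∑ k ∈ Finset.range (n + 1), (((k : ℝ) / n) ^ m) • bernsteinPolynomial ℝ n k

theorem T_zero (n : ℕ) : T 0 n = 1 := by
  simp only [T, pow_zero, one_smul]
  exact bernsteinPolynomial.sum ℝ n

theorem T_succ {n : ℕ} (hn : 1 ≤ n) (m : ℕ) :
    T (m + 1) n = X * T m n + ((n : ℝ))⁻¹ • ((X * (1 - X)) * derivative (T m n)) := by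
  have hn0 : (n : ℝ) ≠ 0 := Nat.cast_ne_zero.2 (by omega)
  simp only [T, derivative_sum, derivative_smul, Finset.mul_sum, mul_smul_comm,
    Finset.smul_sum, smul_smul, ← Finset.sum_add_distrib]
  refine Finset.sum_congr rfl fun k _ => ?_
  rw [← smul_smul ((n:ℝ))⁻¹, bern_deriv]
  have hb : ((k : ℝ[X]) - (n : ℝ[X]) * X) * bernsteinPolynomial ℝ n k
      = (k : ℝ) • bernsteinPolynomial ℝ n k - (n : ℝ) • (X * bernsteinPolynomial ℝ n k) := by
    rw [smul_eq_C_mul, smul_eq_C_mul, C_eq_natCast, C_eq_natCast]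
    ring
  rw [hb]
  match_scalars <;> (field_simp; try ring) <;>
    (have := mul_inv_cancel₀ hn0; linear_combination ((k:ℝ) * (k:ℝ) ^ m * ((n:ℝ))⁻¹ ^ m) * this)


theorem coeff_aux (p : ℝ[X]) (j : ℕ) :
    ((X * (1 - X)) * derivative p).coeff j
      = j * p.coeff j - ((j - 1 : ℕ) : ℝ) * p.coeff (j - 1) := by
  have hxx : (X * (1 - X) : ℝ[X]) = X - X ^ 2 := by ring
  rw [hxx, sub_mul, coeff_sub]
  match j with
  | 0 => simp [mul_coeff_zero, coeff_X_zero]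
  | 1 =>
      rw [coeff_X_mul]
      have h2 : (X ^ 2 * derivative p).coeff 1 = 0 := by
        rw [pow_two, mul_assoc, coeff_X_mul, mul_coeff_zero, coeff_X_zero, zero_mul]
      rw [h2, coeff_derivative]
      push_cast
      ring
  | (d+2) =>
      rw [coeff_X_mul, coeff_X_pow_mul, coeff_derivative, coeff_derivative]
      have : (d + 2) - 1 = d + 1 := by omega
      rw [this]
      push_cast
      ring

theorem T_one {n : ℕ} (hn : 1 ≤ n) : T 1 n = X := by
  rw [T_succ hn 0, T_zero]
  simp

theorem T_natDegree (m : ℕ) {n : ℕ} (hn : 1 ≤ n) : (T m n).natDegree ≤ m := by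
  induction m with
  | zero => simp [T_zero]
  | succ m ih =>
    match m, ih with
    | 0, _ => rw [T_one hn]; simp
    | (m+1), ih =>
      rw [T_succ hn]
      refine (natDegree_add_le _ _).trans (max_le ?_ ?_)
      · refine (natDegree_mul_le).trans ?_
        simp only [natDegree_X]
        omega
      · refine (natDegree_smul_le _ _).trans ?_
        refine (natDegree_mul_le).trans ?_
        have h1 : (X * (1 - X) : ℝ[X]).natDegree ≤ 2 := by
          refine (natDegree_mul_le).trans ?_
          have : (1 - X : ℝ[X]).natDegree ≤ 1 :=
            (natDegree_sub_le _ _).trans (by simp)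
          rw [natDegree_X]; omega
        have h2 : (derivative (T (m+1) n)).natDegree ≤ m :=
          (natDegree_derivative_le _).trans (by omega)
        omega

theorem T_coeff_tendsto (m j : ℕ) :
    Tendsto (fun n => (T m n).coeff j) atTop (𝓝 ((X ^ m : ℝ[X]).coeff j)) := by
  induction m generalizing j with
  | zero => simp only [T_zero, pow_zero]; exact tendsto_const_nhds
  | succ m ih =>
    have hev : (fun n => (T (m+1) n).coeff j) =ᶠ[atTop] fun n =>
        (X * T m n).coeff j + ((n:ℝ))⁻¹ * ((X * (1 - X)) * derivative (T m n)).coeff j := by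
      filter_upwards [eventually_ge_atTop 1] with n hn
      rw [T_succ hn, coeff_add, coeff_smul, smul_eq_mul]
    have h2 : Tendsto (fun n : ℕ =>
        ((n:ℝ))⁻¹ * ((X * (1 - X)) * derivative (T m n)).coeff j) atTop (𝓝 0) := by
      have hb : Tendsto (fun n => ((X * (1 - X)) * derivative (T m n)).coeff j) atTop
          (𝓝 ((j : ℝ) * (X ^ m : ℝ[X]).coeff j - ((j - 1 : ℕ) : ℝ) * (X ^ m : ℝ[X]).coeff (j - 1))) := by
        simp only [coeff_aux]
        exact ((ih j).const_mul _).sub ((ih (j-1)).const_mul _)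
      have hinv : Tendsto (fun n : ℕ => ((n:ℝ))⁻¹) atTop (𝓝 0) :=
        tendsto_inv_atTop_zero.comp tendsto_natCast_atTop_atTop
      simpa using hinv.mul hb
    rcases j with _ | j'
    · have h1 : Tendsto (fun n => (X * T m n).coeff 0) atTop (𝓝 0) := by
        simp only [mul_coeff_zero, coeff_X_zero, zero_mul]
        exact tendsto_const_nhds
      have := (h1.add h2).congr' hev.symm
      simpa [coeff_X_pow] using this
    · have h1 : Tendsto (fun n => (X * T m n).coeff (j'+1)) atTop (𝓝 ((X^m : ℝ[X]).coeff j')) := by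
        simp only [coeff_X_mul]
        exact ih j'
      have := (h1.add h2).congr' hev.symm
      have hc : (X ^ (m+1) : ℝ[X]).coeff (j'+1) = (X ^ m : ℝ[X]).coeff j' := by
        simp [coeff_X_pow]
      rw [hc]
      simpa using this


theorem L_T_tendsto (L : Polynomial ℝ →ₗ[ℝ] ℝ) (m : ℕ) :
    Tendsto (fun n => L (T m n)) atTop (𝓝 (L (X ^ m))) := by
  have hev : (fun n => L (T m n)) =ᶠ[atTop]
      fun n => ∑ j ∈ Finset.range (m + 1), (T m n).coeff j * L (X ^ j) := by
    filter_upwards [eventually_ge_atTop 1] with n hn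
    exact L_eq_sum L (T_natDegree m hn)
  have htar : L (X ^ m) = ∑ j ∈ Finset.range (m + 1), (X ^ m : ℝ[X]).coeff j * L (X ^ j) :=
    L_eq_sum L (by simp)
  rw [htar]
  refine Tendsto.congr' hev.symm ?_
  exact tendsto_finset_sum _ fun j _ => (T_coeff_tendsto m j).mul_const _


variable (L : Polynomial ℝ →ₗ[ℝ] ℝ)

/-- Weights of the discrete approximating measures. -/
noncomputable def w (n k : ℕ) : ℝ := L (bernsteinPolynomial ℝ n k)

/-- Discrete cumulative distribution functions. -/
noncomputable def Fn (n : ℕ) (t : ℝ) : ℝ :=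
  ∑ k ∈ Finset.range (n + 1), if (k : ℝ) / n ≤ t then w L n k else 0

theorem M_nonneg (hL : Pos L) : 0 ≤ L 1 := by
  have := (hL 1).1; simpa using this

theorem sum_w (n : ℕ) : ∑ k ∈ Finset.range (n + 1), w L n k = L 1 := by
  simp only [w]; rw [← map_sum]
  congr 1
  exact bernsteinPolynomial.sum ℝ n

theorem div_le_one_of_mem {n k : ℕ} (hk : k ∈ Finset.range (n + 1)) : (k : ℝ) / n ≤ 1 := by
  have hkn : k ≤ n := Nat.lt_succ_iff.mp (Finset.mem_range.mp hk)
  rcases Nat.eq_zero_or_pos n with h | h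
  · subst h; interval_cases k; simp
  · rw [div_le_one (by exact_mod_cast h)]; exact_mod_cast hkn

theorem Fn_nonneg (hL : Pos L) (n : ℕ) (t : ℝ) : 0 ≤ Fn L n t := by
  refine Finset.sum_nonneg fun k _ => ?_
  split_ifs
  · exact pos_bernstein hL n k
  · exact le_rfl

theorem Fn_le (hL : Pos L) (n : ℕ) (t : ℝ) : Fn L n t ≤ L 1 := by
  rw [← sum_w L n]
  refine Finset.sum_le_sum fun k _ => ?_
  split_ifs
  · exact le_rfl
  · exact pos_bernstein hL n k

theorem Fn_mono (hL : Pos L) (n : ℕ) : Monotone (Fn L n) := by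
  intro t t' htt'
  refine Finset.sum_le_sum fun k _ => ?_
  by_cases h : (k : ℝ) / n ≤ t
  · rw [if_pos h, if_pos (h.trans htt')]
  · rw [if_neg h]
    split_ifs
    · exact pos_bernstein hL n k
    · exact le_rfl

theorem Fn_eq_of_one_le (n : ℕ) {t : ℝ} (ht : 1 ≤ t) : Fn L n t = L 1 := by
  rw [← sum_w L n]
  exact Finset.sum_congr rfl fun k hk => if_pos ((div_le_one_of_mem hk).trans ht)

theorem Fn_eq_zero_of_neg (n : ℕ) {t : ℝ} (ht : t < 0) : Fn L n t = 0 := by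
  rw [Fn]
  refine Finset.sum_eq_zero fun k _ => if_neg (by
    intro h
    exact absurd (h.trans_lt ht) (not_lt.mpr (by positivity)))

theorem L_T_eq (m n : ℕ) : L (T m n) = ∑ k ∈ Finset.range (n + 1), ((k:ℝ)/n) ^ m * w L n k := by
  rw [T, map_sum]
  exact Finset.sum_congr rfl fun k _ => by rw [_root_.map_smul, smul_eq_mul, w]

theorem integral_form (hL : Pos L) (n : ℕ) {m : ℕ} (hm : 1 ≤ m) :
    ∫ t in Ioi (0:ℝ), (L 1 - Fn L n (t ^ ((m:ℝ)⁻¹))) = L (T m n) := by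
  have key : ∀ t ∈ Ioi (0:ℝ), L 1 - Fn L n (t ^ ((m:ℝ)⁻¹))
      = ∑ k ∈ Finset.range (n + 1), (Iio (((k:ℝ)/n) ^ m)).indicator (fun _ => w L n k) t := by
    intro t ht
    rw [← sum_w L n, Fn, ← Finset.sum_sub_distrib]
    refine Finset.sum_congr rfl fun k hk => ?_
    have hc : (0:ℝ) ≤ (k:ℝ)/n := by positivity
    have hiff : ((k:ℝ)/n ≤ t ^ ((m:ℝ)⁻¹)) ↔ ¬ (t < ((k:ℝ)/n) ^ m) := by
      rw [not_lt]
      have hts : (0:ℝ) ≤ t ^ ((m:ℝ)⁻¹) := Real.rpow_nonneg (le_of_lt ht) _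
      rw [← pow_le_pow_iff_left₀ hc hts (by omega : m ≠ 0)]
      have : (t ^ ((m:ℝ)⁻¹)) ^ m = t := by
        rw [← Real.rpow_natCast (t ^ ((m:ℝ)⁻¹)) m, ← Real.rpow_mul (le_of_lt ht),
          inv_mul_cancel₀ (Nat.cast_ne_zero.mpr (by omega)),
          Real.rpow_one]
      rw [this]
    rw [Set.indicator_apply]
    by_cases h : (k : ℝ) / n ≤ t ^ ((m:ℝ)⁻¹)
    · rw [if_pos h, sub_self, if_neg (by simpa using hiff.mp h)]
    · rw [if_neg h, sub_zero, if_pos (by simpa [Set.mem_Iio] using not_not.mp (mt hiff.mpr h))]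
  rw [setIntegral_congr_fun measurableSet_Ioi key]
  have hint : ∀ k ∈ Finset.range (n + 1),
      Integrable ((Iio (((k:ℝ)/n) ^ m)).indicator (fun _ => w L n k))
        (volume.restrict (Ioi 0)) := by
    intro k _
    rw [integrable_indicator_iff measurableSet_Iio]
    refine integrableOn_const (lt_top_iff_ne_top.mp ?_)
    rw [Measure.restrict_apply measurableSet_Iio, Set.Iio_inter_Ioi]
    exact lt_of_le_of_lt (le_of_eq (Real.volume_Ioo)) ENNReal.ofReal_lt_top
  rw [integral_finset_sum _ hint, L_T_eq]
  refine Finset.sum_congr rfl fun k _ => ?_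
  rw [integral_indicator_const _ measurableSet_Iio]
  rw [measureReal_def, Measure.restrict_apply measurableSet_Iio, Set.Iio_inter_Ioi, Real.volume_Ioo,
    smul_eq_mul]
  rw [ENNReal.toReal_ofReal (by rw [sub_zero]; positivity)]
  ring


theorem exists_rep (L : Polynomial ℝ →ₗ[ℝ] ℝ) (hL : Pos L) :
    ∃ μ : Measure (Set.Icc (0:ℝ) 1),
      ∀ p : Polynomial ℝ, L p = ∫ x : Set.Icc (0:ℝ) 1, p.eval (x : ℝ) ∂μ := by
  set M := L 1 with hM
  have hM0 : 0 ≤ M := M_nonneg L hL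
  haveI : CompactSpace (Icc (0:ℝ) M) := isCompact_iff_compactSpace.mp isCompact_Icc
  obtain ⟨a, φ, hφ, hconv⟩ := CompactSpace.tendsto_subseq
    (fun n => fun q : ℚ => (⟨Fn L n q, Fn_nonneg L hL n q, Fn_le L hL n q⟩ : Icc (0:ℝ) M))
  have hpt : ∀ q : ℚ, Tendsto (fun j => Fn L (φ j) q) atTop (𝓝 ((a q : ℝ))) := by
    intro q
    exact (continuous_subtype_val.tendsto (a q)).comp (tendsto_pi_nhds.mp hconv q)
  set G : ℚ → ℝ := fun q => (a q : ℝ) with hG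
  have hG0 : ∀ q, 0 ≤ G q := fun q => (a q).2.1
  have hGM : ∀ q, G q ≤ M := fun q => (a q).2.2
  have hGone : ∀ q : ℚ, (1:ℝ) ≤ (q:ℝ) → G q = M := fun q hq =>
    tendsto_nhds_unique (hpt q)
      (tendsto_const_nhds.congr fun j => (Fn_eq_of_one_le L (φ j) hq).symm)
  have hGneg : ∀ q : ℚ, (q:ℝ) < 0 → G q = 0 := fun q hq =>
    tendsto_nhds_unique (hpt q)
      (tendsto_const_nhds.congr fun j => (Fn_eq_zero_of_neg L (φ j) hq).symm)
  set F : ℝ → ℝ := fun t => sInf (G '' {q : ℚ | t < (q:ℝ)}) with hF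
  have hne : ∀ t : ℝ, (G '' {q : ℚ | t < (q:ℝ)}).Nonempty := by
    intro t; obtain ⟨q, hq⟩ := exists_rat_gt t; exact ⟨G q, ⟨q, hq, rfl⟩⟩
  have hbdd : ∀ t : ℝ, BddBelow (G '' {q : ℚ | t < (q:ℝ)}) := by
    intro t
    refine ⟨0, ?_⟩
    rintro x ⟨q, _, rfl⟩
    exact hG0 q
  have hF_le : ∀ (t : ℝ) (q : ℚ), t < (q:ℝ) → F t ≤ G q := fun t q hq =>
    csInf_le (hbdd t) ⟨q, hq, rfl⟩
  have hF0 : ∀ t, 0 ≤ F t := by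
    intro t
    refine le_csInf (hne t) ?_
    rintro x ⟨q, _, rfl⟩
    exact hG0 q
  have hFM : ∀ t, F t ≤ M := by
    intro t
    obtain ⟨q, hq⟩ := exists_rat_gt t
    exact (hF_le t q hq).trans (hGM q)
  have hFmono : Monotone F := fun t t' h =>
    csInf_le_csInf (hbdd t) (hne t') (Set.image_mono fun q hq => lt_of_le_of_lt h hq)
  have hFone : ∀ t : ℝ, 1 ≤ t → F t = M := by
    intro t ht
    refine le_antisymm (hFM t) (le_csInf (hne t) ?_)
    rintro x ⟨q, hq, rfl⟩
    exact le_of_eq (hGone q (le_of_lt (lt_of_le_of_lt ht hq))).symm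
  have hFneg : ∀ t : ℝ, t < 0 → F t = 0 := by
    intro t ht
    refine le_antisymm ?_ (hF0 t)
    obtain ⟨q, hq1, hq2⟩ := exists_rat_btwn ht
    exact (hF_le t q hq1).trans (le_of_eq (hGneg q (by exact_mod_cast hq2)))
  have hFrc : ∀ x : ℝ, ContinuousWithinAt F (Ici x) x := by
    intro x
    rw [ContinuousWithinAt]
    refine tendsto_order.2 ⟨fun l hl => ?_, fun u hu => ?_⟩
    · filter_upwards [self_mem_nhdsWithin] with t ht
      exact lt_of_lt_of_le hl (hFmono ht)
    · obtain ⟨y, ⟨q, hq, rfl⟩, hyu⟩ := exists_lt_of_csInf_lt (hne x) hu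
      filter_upwards [Ico_mem_nhdsGE hq] with t ht
      exact lt_of_le_of_lt (hF_le t q ht.2) hyu
  set SF : StieltjesFunction ℝ := ⟨F, hFmono, hFrc⟩ with hSF
  have hSFapp : ∀ t, SF t = F t := fun t => rfl
  have hbot : Tendsto (SF : ℝ → ℝ) atBot (𝓝 0) := by
    refine tendsto_const_nhds.congr' ?_
    filter_upwards [eventually_lt_atBot (0:ℝ)] with t ht
    exact (hFneg t ht).symm
  have htop : Tendsto (SF : ℝ → ℝ) atTop (𝓝 M) := by
    refine tendsto_const_nhds.congr' ?_
    filter_upwards [eventually_ge_atTop (1:ℝ)] with t ht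
    exact (hFone t ht).symm
  set μ' := SF.measure with hμ'
  have hUniv : μ' univ = ENNReal.ofReal M := by
    rw [hμ', SF.measure_univ hbot htop, sub_zero]
  haveI : IsFiniteMeasure μ' := ⟨by rw [hUniv]; exact ENNReal.ofReal_lt_top⟩
  have hIic : ∀ s : ℝ, μ' (Iic s) = ENNReal.ofReal (F s) := by
    intro s
    rw [hμ', SF.measure_Iic hbot, sub_zero, hSFapp]
  have hIoi : ∀ s : ℝ, μ' (Ioi s) = ENNReal.ofReal (M - F s) := by
    intro s
    rw [← Set.compl_Iic, measure_compl measurableSet_Iic (measure_ne_top μ' _), hIic s,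
      hUniv, ENNReal.ofReal_sub _ (hF0 s)]
  have hIio0 : μ' (Iio 0) = 0 := by
    have hsub : Iio (0:ℝ) ⊆ ⋃ q ∈ {q : ℚ | (q:ℝ) < 0}, Iic (q:ℝ) := by
      intro x hx
      obtain ⟨q, hq1, hq2⟩ := exists_rat_btwn (show x < (0:ℝ) from hx)
      exact mem_biUnion (by exact_mod_cast hq2) (le_of_lt hq1)
    refine measure_mono_null hsub ((measure_biUnion_null_iff (to_countable _)).mpr ?_)
    intro q hq
    rw [hIic (q:ℝ), hFneg _ hq, ENNReal.ofReal_zero]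
  have hIoi1 : μ' (Ioi 1) = 0 := by
    rw [hIoi 1, hFone 1 le_rfl, sub_self, ENNReal.ofReal_zero]
  have hcompl : μ' ((Icc (0:ℝ) 1)ᶜ) = 0 := by
    have hsub : (Icc (0:ℝ) 1)ᶜ ⊆ Iio 0 ∪ Ioi 1 := by
      intro x hx
      simp only [Set.mem_compl_iff, Set.mem_Icc, not_and_or, not_le] at hx
      rcases hx with h | h
      · exact Or.inl h
      · exact Or.inr h
    exact measure_mono_null hsub (measure_union_null hIio0 hIoi1)
  have haemem : ∀ᵐ x ∂μ', x ∈ Icc (0:ℝ) 1 := mem_ae_iff.mpr hcompl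
  have hrestrict : μ'.restrict (Icc 0 1) = μ' := Measure.restrict_eq_self_of_ae_mem haemem
  have hIcc : μ' (Icc (0:ℝ) 1) = ENNReal.ofReal M := by
    have h := measure_add_measure_compl (μ := μ') (measurableSet_Icc (a := (0:ℝ)) (b := 1))
    rw [hcompl, add_zero] at h
    rw [h, hUniv]
  have hFnF : ∀ s : ℝ, ContinuousAt F s → Tendsto (fun j => Fn L (φ j) s) atTop (𝓝 (F s)) := by
    intro s hcont
    refine tendsto_order.2 ⟨fun l hl => ?_, fun u hu => ?_⟩
    · have hleft : Tendsto F (𝓝[<] s) (𝓝 (F s)) := hcont.continuousWithinAt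
      obtain ⟨s', hs'1, hs'2⟩ := ((hleft.eventually_const_lt hl).and self_mem_nhdsWithin).exists
      obtain ⟨q, hq1, hq2⟩ := exists_rat_btwn (show s' < s from hs'2)
      have hlG : l < G q := lt_of_lt_of_le hs'1 (hF_le s' q hq1)
      filter_upwards [(hpt q).eventually_const_lt hlG] with j hj
      exact lt_of_lt_of_le hj (Fn_mono L hL (φ j) (le_of_lt hq2))
    · obtain ⟨y, ⟨q, hq, rfl⟩, hyu⟩ := exists_lt_of_csInf_lt (hne s) hu
      filter_upwards [(hpt q).eventually_lt_const hyu] with j hj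
      exact lt_of_le_of_lt (Fn_mono L hL (φ j) (le_of_lt hq)) hj
  have hmoment : ∀ m : ℕ, 1 ≤ m →
      ∫ t in Ioi (0:ℝ), (M - F (t ^ ((m:ℝ)⁻¹))) = L (X ^ m) := by
    intro m hm
    have hmR : (0:ℝ) ≤ (m:ℝ)⁻¹ := by positivity
    have hmne : ((m:ℝ)) ≠ 0 := Nat.cast_ne_zero.mpr (by omega)
    have hmeas : ∀ j : ℕ, AEStronglyMeasurable (fun t : ℝ => M - Fn L (φ j) (t ^ ((m:ℝ)⁻¹)))
        (volume.restrict (Ioi 0)) := by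
      intro j
      exact (measurable_const.sub ((Fn_mono L hL (φ j)).measurable.comp
        (Real.continuous_rpow_const hmR).measurable)).aestronglyMeasurable
    have hboundInt : Integrable ((Ioc (0:ℝ) 1).indicator fun _ => M)
        (volume.restrict (Ioi 0)) := by
      rw [integrable_indicator_iff measurableSet_Ioc]
      refine integrableOn_const (lt_top_iff_ne_top.mp ?_)
      rw [Measure.restrict_apply measurableSet_Ioc]
      exact lt_of_le_of_lt (measure_mono inter_subset_left)
        (by rw [Real.volume_Ioc]; exact ENNReal.ofReal_lt_top)
    have hbound : ∀ j, ∀ᵐ t ∂(volume.restrict (Ioi 0)),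
        ‖M - Fn L (φ j) (t ^ ((m:ℝ)⁻¹))‖ ≤ (Ioc (0:ℝ) 1).indicator (fun _ => M) t := by
      intro j
      rw [ae_restrict_iff' measurableSet_Ioi]
      refine ae_of_all _ fun t ht => ?_
      by_cases h1 : t ≤ 1
      · rw [Set.indicator_of_mem (Set.mem_Ioc.mpr ⟨ht, h1⟩), Real.norm_eq_abs, abs_le]
        constructor
        · have := Fn_le L hL (φ j) (t ^ ((m:ℝ)⁻¹)); linarith
        · have := Fn_nonneg L hL (φ j) (t ^ ((m:ℝ)⁻¹)); linarith
      · rw [Set.indicator_of_notMem (fun hmem => h1 hmem.2)]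
        rw [Fn_eq_of_one_le L _ (Real.one_le_rpow (le_of_not_ge h1) hmR), ← hM, sub_self,
          norm_zero]
    have haelim : ∀ᵐ t ∂(volume.restrict (Ioi 0)),
        Tendsto (fun j => M - Fn L (φ j) (t ^ ((m:ℝ)⁻¹))) atTop
          (𝓝 (M - F (t ^ ((m:ℝ)⁻¹)))) := by
      have hDcount : Set.Countable {s : ℝ | ¬ContinuousAt F s} :=
        hFmono.countable_not_continuousAt
      have hE0 : volume ((fun s : ℝ => s ^ m) '' {s : ℝ | ¬ContinuousAt F s}) = 0 :=
        (hDcount.image _).measure_zero _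
      have hae : ∀ᵐ t : ℝ, t ∉ (fun s : ℝ => s ^ m) '' {s : ℝ | ¬ContinuousAt F s} :=
        measure_eq_zero_iff_ae_notMem.mp hE0
      rw [ae_restrict_iff' measurableSet_Ioi]
      filter_upwards [hae] with t htE ht
      have hcont : ContinuousAt F (t ^ ((m:ℝ)⁻¹)) := by
        by_contra hc
        refine htE ⟨t ^ ((m:ℝ)⁻¹), hc, ?_⟩
        show (t ^ ((m:ℝ)⁻¹)) ^ m = t
        rw [← Real.rpow_natCast (t ^ ((m:ℝ)⁻¹)) m, ← Real.rpow_mul (le_of_lt ht),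
          inv_mul_cancel₀ hmne, Real.rpow_one]
      exact tendsto_const_nhds.sub (hFnF _ hcont)
    have hDCT := tendsto_integral_of_dominated_convergence _ hmeas hboundInt hbound haelim
    have hvals : (fun j => ∫ t in Ioi (0:ℝ), (M - Fn L (φ j) (t ^ ((m:ℝ)⁻¹))))
        = fun j => L (T m (φ j)) := funext fun j => integral_form L hL (φ j) hm
    rw [hvals] at hDCT
    have h2 : Tendsto (fun j => L (T m (φ j))) atTop (𝓝 (L (X ^ m))) :=
      (L_T_tendsto L m).comp hφ.tendsto_atTop
    exact tendsto_nhds_unique hDCT h2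
  have hmom : ∀ m : ℕ, ∫ x in Icc (0:ℝ) 1, x ^ m ∂μ' = L (X ^ m) := by
    intro m
    rcases Nat.eq_zero_or_pos m with rfl | hm
    · simp only [pow_zero]
      rw [setIntegral_const, measureReal_def, hIcc, ENNReal.toReal_ofReal hM0, smul_eq_mul, mul_one, hM]
    · have hmR : (0:ℝ) ≤ (m:ℝ)⁻¹ := by positivity
      have hmne : ((m:ℝ)) ≠ 0 := Nat.cast_ne_zero.mpr (by omega)
      set g : ℝ → ℝ := fun x => (min (max x 0) 1) ^ m with hg
      have hgc : Continuous g := ((continuous_id.max continuous_const).min continuous_const).pow m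
      have hg01 : ∀ x, 0 ≤ g x ∧ g x ≤ 1 := by
        intro x
        have h0 : 0 ≤ min (max x 0) 1 := le_min (le_max_right x 0) zero_le_one
        exact ⟨pow_nonneg h0 m, pow_le_one₀ h0 (min_le_right _ _)⟩
      have hEq : EqOn (fun x : ℝ => x ^ m) g (Icc 0 1) := by
        intro x hx
        simp only [hg]
        rw [max_eq_left hx.1, min_eq_left hx.2]
      have hint : Integrable g μ' := by
        refine Integrable.mono' (integrable_const 1) hgc.aestronglyMeasurable
          (ae_of_all _ fun x => ?_)
        rw [Real.norm_eq_abs, abs_of_nonneg (hg01 x).1]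
        exact (hg01 x).2
      have hlay := hint.integral_eq_integral_meas_lt (ae_of_all _ fun x => (hg01 x).1)
      have hset : ∀ t ∈ Ioi (0:ℝ), (μ' {a : ℝ | t < g a}).toReal = M - F (t ^ ((m:ℝ)⁻¹)) := by
        intro t ht
        by_cases h1 : 1 ≤ t
        · have hempty : {a : ℝ | t < g a} = ∅ := by
            ext x
            simp only [mem_setOf_eq, mem_empty_iff_false, iff_false, not_lt]
            exact (hg01 x).2.trans h1
          rw [hempty, measure_empty, ENNReal.toReal_zero,
            hFone _ (Real.one_le_rpow h1 hmR), sub_self]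
        · push_neg at h1
          set c := t ^ ((m:ℝ)⁻¹) with hc
          have hc0 : 0 < c := Real.rpow_pos_of_pos ht _
          have hc1 : c < 1 := Real.rpow_lt_one (le_of_lt ht) h1 (by positivity)
          have hcm : c ^ m = t := by
            rw [hc, ← Real.rpow_natCast (t ^ ((m:ℝ)⁻¹)) m, ← Real.rpow_mul (le_of_lt ht),
              inv_mul_cancel₀ hmne, Real.rpow_one]
          have hsetEq : {a : ℝ | t < g a} = Ioi c := by
            ext x
            simp only [Set.mem_setOf_eq, Set.mem_Ioi, hg]
            have hproj0 : 0 ≤ min (max x 0) 1 := le_min (le_max_right x 0) zero_le_one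
            constructor
            · intro hlt
              rw [← hcm] at hlt
              have h2 : c < min (max x 0) 1 :=
                (pow_lt_pow_iff_left₀ (le_of_lt hc0) hproj0 (by omega)).mp hlt
              rcases lt_max_iff.mp (lt_of_lt_of_le h2 (min_le_left _ _)) with h | h
              · exact h
              · exact absurd h (not_lt.mpr (le_of_lt hc0))
            · intro hcx
              have h2 : c < min (max x 0) 1 :=
                lt_min (lt_of_lt_of_le hcx (le_max_left x 0)) hc1
              rw [← hcm]
              exact (pow_lt_pow_iff_left₀ (le_of_lt hc0) hproj0 (by omega)).mpr h2
          rw [hsetEq, hIoi c, ENNReal.toReal_ofReal (by have := hFM c; linarith)]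
      calc ∫ x in Icc (0:ℝ) 1, x ^ m ∂μ'
          = ∫ x in Icc (0:ℝ) 1, g x ∂μ' := setIntegral_congr_fun measurableSet_Icc hEq
        _ = ∫ x, g x ∂μ' := by rw [hrestrict]
        _ = ∫ t in Ioi (0:ℝ), (μ' {a : ℝ | t < g a}).toReal := hlay
        _ = ∫ t in Ioi (0:ℝ), (M - F (t ^ ((m:ℝ)⁻¹))) :=
            setIntegral_congr_fun measurableSet_Ioi hset
        _ = L (X ^ m) := hmoment m hm
  refine ⟨μ'.comap Subtype.val, fun p => ?_⟩
  rw [integral_subtype_comap measurableSet_Icc (fun x => p.eval x)]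
  have hintj : ∀ j : ℕ, IntegrableOn (fun x : ℝ => p.coeff j * x ^ j) (Icc 0 1) μ' := by
    intro j
    refine Integrable.mono' (integrable_const |p.coeff j|)
      ((continuous_const.mul (continuous_pow j)).aestronglyMeasurable) ?_
    rw [ae_restrict_iff' measurableSet_Icc]
    refine ae_of_all _ fun x hx => ?_
    rw [Real.norm_eq_abs, abs_mul]
    have hxj : |x ^ j| ≤ 1 := by
      rw [abs_pow]
      exact pow_le_one₀ (abs_nonneg x) (abs_le.mpr ⟨by linarith [hx.1], hx.2⟩)
    calc |p.coeff j| * |x ^ j| ≤ |p.coeff j| * 1 :=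
          mul_le_mul_of_nonneg_left hxj (abs_nonneg _)
      _ = |p.coeff j| := mul_one _
  have hexp : ∫ x in Icc (0:ℝ) 1, p.eval x ∂μ'
      = ∑ j ∈ Finset.range (p.natDegree + 1), p.coeff j * L (X ^ j) := by
    rw [show (fun x : ℝ => p.eval x)
        = fun x => ∑ j ∈ Finset.range (p.natDegree + 1), p.coeff j * x ^ j from
      funext fun x => eval_eq_sum_range x]
    rw [integral_finset_sum _ fun j _ => hintj j]
    refine Finset.sum_congr rfl fun j _ => ?_
    rw [integral_const_mul, hmom j]
  rw [hexp, ← L_eq_sum L le_rfl]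


end HausdorffMP

/-- Hausdorff's theorem on the `[0,1]` moment problem: a linear functional
`L : ℝ[X] → ℝ` has a representing Borel measure on `[0,1]` if and only if
`L(p²) ≥ 0` and `L(X(1-X)p²) ≥ 0` for every polynomial `p`. -/
theorem hausdorff_moment_problem (L : Polynomial ℝ →ₗ[ℝ] ℝ) :
    (∃ μ : MeasureTheory.Measure (Set.Icc (0:ℝ) 1),
      ∀ p : Polynomial ℝ, L p = ∫ x : Set.Icc (0:ℝ) 1, p.eval (x : ℝ) ∂μ) ↔
    (∀ p : Polynomial ℝ,
      0 ≤ L (p ^ 2) ∧ 0 ≤ L (Polynomial.X * (1 - Polynomial.X) * p ^ 2)) := by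
  constructor
  · rintro ⟨μ, hμ⟩ p
    constructor
    · rw [hμ]
      refine MeasureTheory.integral_nonneg fun x => ?_
      simp only [Polynomial.eval_pow]
      positivity
    · rw [hμ]
      refine MeasureTheory.integral_nonneg fun x => ?_
      simp only [Polynomial.eval_mul, Polynomial.eval_sub, Polynomial.eval_one,
        Polynomial.eval_X, Polynomial.eval_pow]
      have h1 : (0:ℝ) ≤ x := x.2.1
      have h2 : (x:ℝ) ≤ 1 := x.2.2
      have h3 : (0:ℝ) ≤ 1 - (x:ℝ) := by linarith
      positivity
  · intro hL
    exact HausdorffMP.exists_rep L hL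
end
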